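/- arXiv:1508.02032 — 3 statements merged into one kernel-verified Lean document; each statement's English description precedes it below -/
import Mathlib

section
/- Let G be a topological group and let (π, H_π) and (τ, H_τ) be strongly continuous unitary representations of G on complex Hilbert spaces. Let V be a dense G-invariant linear subspace of H_π and let T : V → H_τ be a linear operator whose graph is closed in H_π × H_τ and which is G-equivariant, i.e. T(π(g)v) = τ(g)(T v) for all g ∈ G and v ∈ V. Then there exists a surjective linear isometry Φ from the orthogonal complement (ker T)^⊥ of the kernel of T onto the closure of the range of T which is G-equivariant: Φ(π(g)x) = τ(g)(Φ x) for all g ∈ G and all x ∈ (ker T)^⊥. (Mackey's Schur Lemma.) -/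
set_option maxHeartbeats 2000000
set_option synthInstance.maxHeartbeats 1000000

open ContinuousLinearMap Topology

noncomputable section MackeyAux

variable {K H : Type*} [NormedAddCommGroup K] [InnerProductSpace ℂ K]
  [NormedAddCommGroup H] [InnerProductSpace ℂ H]

private lemma mackey_eq_zero_of_inner (V : Submodule ℂ K) (hd : Dense (V : Set K))
    (x : K) (h : ∀ v ∈ V, (inner ℂ x v : ℂ) = 0) : x = 0 := by
  have hclosed : IsClosed {z : K | (inner ℂ x z : ℂ) = 0} :=
    isClosed_eq (continuous_const.inner continuous_id) continuous_const
  have hsub : (V : Set K) ⊆ {z : K | (inner ℂ x z : ℂ) = 0} := fun v hv => h v hv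
  have hall : ∀ z : K, (inner ℂ x z : ℂ) = 0 := by
    intro z
    have := hclosed.closure_subset_iff.mpr hsub
    rw [hd.closure_eq] at this
    exact this (Set.mem_univ z)
  exact inner_self_eq_zero.mp (hall x)

private lemma mackey_range_adjoint_orthogonal [CompleteSpace K] [CompleteSpace H]
    (A : K →L[ℂ] H) :
    (LinearMap.range (ContinuousLinearMap.adjoint A : H →ₗ[ℂ] K))ᗮ = LinearMap.ker (A : K →ₗ[ℂ] H) := by
  ext x
  rw [Submodule.mem_orthogonal, LinearMap.mem_ker]
  constructor
  · intro h
    have h0 : (inner ℂ (A x) (A x) : ℂ) = 0 := by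
      rw [← ContinuousLinearMap.adjoint_inner_left]
      exact h _ (LinearMap.mem_range_self _ (A x))
    simpa using inner_self_eq_zero.mp h0
  · rintro h u hu
    obtain ⟨y, rfl⟩ := hu
    rw [ContinuousLinearMap.coe_coe, ContinuousLinearMap.adjoint_inner_left, show A x = 0 from h,
      inner_zero_right]

private theorem mackey_phase_exists [CompleteSpace K] [CompleteSpace H]
    (W : K →L[ℂ] H) (R : Submodule ℂ H)
    (hWR : ∀ x, W x ∈ R) (hRcl : IsClosed (R : Set H))
    (hRW : (R : Set H) ⊆ closure ((LinearMap.range (W : K →ₗ[ℂ] H) : Submodule ℂ H) : Set H)) :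
    ∃ Φ : ((LinearMap.ker (W : K →ₗ[ℂ] H))ᗮ : Submodule ℂ K) →ₗᵢ[ℂ] R,
      Function.Surjective Φ ∧
      ∀ (u u' : K →L[ℂ] K) (v v' : H →L[ℂ] H),
        u.comp u' = 1 → u'.comp u = 1 →
        ContinuousLinearMap.adjoint u = u' → ContinuousLinearMap.adjoint v' = v →
        W.comp u = v.comp W → W.comp u' = v'.comp W →
        ∀ (x : K) (hx : x ∈ (LinearMap.ker (W : K →ₗ[ℂ] H))ᗮ) (hux : u x ∈ (LinearMap.ker (W : K →ₗ[ℂ] H))ᗮ),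
          (Φ ⟨u x, hux⟩ : H) = v (Φ ⟨x, hx⟩) := by
  haveI : CompleteSpace R := hRcl.completeSpace_coe
  set B : K →L[ℂ] K := (ContinuousLinearMap.adjoint W).comp W with hBdef
  have hBpos : 0 ≤ B := by
    rw [ContinuousLinearMap.nonneg_iff_isPositive]
    have h := (ContinuousLinearMap.isPositive_one (E := H) (𝕜 := ℂ)).adjoint_conj W
    simpa [ContinuousLinearMap.one_def] using h
  set S : K →L[ℂ] K := CFC.sqrt B with hSdef
  have hSpos : 0 ≤ S := CFC.sqrt_nonneg B
  have hSsa : ContinuousLinearMap.adjoint S = S :=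
    ContinuousLinearMap.isSelfAdjoint_iff'.mp (IsSelfAdjoint.of_nonneg hSpos)
  have hSSm : S * S = B := CFC.sqrt_mul_sqrt_self B hBpos
  have hSS : ∀ x : K, S (S x) = B x := by
    intro x
    have := congrArg (fun (A : K →L[ℂ] K) => A x) hSSm
    simpa [ContinuousLinearMap.mul_apply] using this
  have hinner : ∀ x : K, (inner ℂ (S x) (S x) : ℂ) = inner ℂ (W x) (W x) := by
    intro x
    calc (inner ℂ (S x) (S x) : ℂ)
        = inner ℂ (S x) (ContinuousLinearMap.adjoint S x) := by rw [hSsa]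
      _ = inner ℂ (S (S x)) x := ContinuousLinearMap.adjoint_inner_right S (S x) x
      _ = inner ℂ ((ContinuousLinearMap.adjoint W) (W x)) x := by rw [hSS]; rfl
      _ = inner ℂ (W x) (W x) := ContinuousLinearMap.adjoint_inner_left W x (W x)
  have hnorm : ∀ x : K, ‖S x‖ = ‖W x‖ := by
    intro x
    have h2 : (‖S x‖ : ℝ) ^ 2 = (‖W x‖ : ℝ) ^ 2 := by
      have h1 := hinner x
      rw [inner_self_eq_norm_sq_to_K, inner_self_eq_norm_sq_to_K] at h1
      exact_mod_cast h1
    calc ‖S x‖ = Real.sqrt (‖S x‖ ^ 2) := (Real.sqrt_sq (norm_nonneg _)).symm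
      _ = Real.sqrt (‖W x‖ ^ 2) := by rw [h2]
      _ = ‖W x‖ := Real.sqrt_sq (norm_nonneg _)
  have hker : LinearMap.ker (S : K →ₗ[ℂ] K) = LinearMap.ker (W : K →ₗ[ℂ] H) := by
    ext x
    simp only [LinearMap.mem_ker, ContinuousLinearMap.coe_coe]
    rw [← norm_eq_zero (a := S x), ← norm_eq_zero (a := W x), hnorm]
  have horth : (LinearMap.range (S : K →ₗ[ℂ] K))ᗮ = LinearMap.ker (S : K →ₗ[ℂ] K) := by
    conv_lhs => rw [← hSsa]
    exact mackey_range_adjoint_orthogonal S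
  have hDR : (LinearMap.range (S : K →ₗ[ℂ] K)).topologicalClosure = (LinearMap.ker (W : K →ₗ[ℂ] H))ᗮ := by
    rw [← Submodule.orthogonal_orthogonal_eq_closure, horth, hker]
  haveI : CompleteSpace ((LinearMap.ker (W : K →ₗ[ℂ] H))ᗮ : Submodule ℂ K) :=
    (Submodule.isClosed_orthogonal _).completeSpace_coe
  -- the densely defined isometry
  set Sl : K →ₗ[ℂ] K := (S : K →ₗ[ℂ] K) with hSl
  have hrangeSl : LinearMap.range Sl = LinearMap.range (S : K →ₗ[ℂ] K) := rfl
  have hkerSl : LinearMap.ker Sl = LinearMap.ker (S : K →ₗ[ℂ] K) := rfl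
  set f₀ : K →ₗ[ℂ] R := LinearMap.codRestrict R (W : K →ₗ[ℂ] H) hWR with hf₀
  have hf₀_coe : ∀ x : K, (f₀ x : H) = W x := fun x => rfl
  have hle : LinearMap.ker Sl ≤ LinearMap.ker f₀ := by
    intro x hx
    rw [hkerSl, hker] at hx
    rw [LinearMap.mem_ker]
    apply Subtype.ext
    rw [hf₀_coe]
    simpa using hx
  set f : (LinearMap.range Sl : Submodule ℂ K) →ₗ[ℂ] R :=
    ((LinearMap.ker Sl).liftQ f₀ hle).comp Sl.quotKerEquivRange.symm.toLinearMap with hf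
  have hf_apply : ∀ x : K, f ⟨Sl x, LinearMap.mem_range_self _ x⟩ = f₀ x := by
    intro x
    have h1 : Sl.quotKerEquivRange.symm ⟨Sl x, LinearMap.mem_range_self _ x⟩ =
        Submodule.Quotient.mk x := by
      rw [LinearEquiv.symm_apply_eq]
      exact Subtype.ext (Sl.quotKerEquivRange_apply_mk x).symm
    rw [hf]
    simp only [LinearMap.comp_apply, LinearEquiv.coe_toLinearMap, h1, Submodule.liftQ_apply]
  have hf_norm : ∀ y : (LinearMap.range Sl : Submodule ℂ K), ‖f y‖ = ‖y‖ := by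
    rintro ⟨-, x, rfl⟩
    rw [hf_apply]
    show ‖(f₀ x : H)‖ = ‖Sl x‖
    rw [hf₀_coe, ← hnorm]
    rfl
  set fL : (LinearMap.range Sl : Submodule ℂ K) →L[ℂ] R :=
    f.mkContinuous 1 (fun y => by rw [hf_norm y, one_mul]) with hfL
  have hfL_apply : ∀ y, fL y = f y := fun y => rfl
  have hle2 : LinearMap.range Sl ≤ (LinearMap.ker (W : K →ₗ[ℂ] H))ᗮ := by
    rw [hrangeSl, ← hDR]
    exact Submodule.le_topologicalClosure _
  set ι : (LinearMap.range Sl : Submodule ℂ K) →ₗᵢ[ℂ] ((LinearMap.ker (W : K →ₗ[ℂ] H))ᗮ : Submodule ℂ K) :=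
    ⟨Submodule.inclusion hle2, fun x => rfl⟩ with hι
  set ιL := ι.toContinuousLinearMap with hιL
  have hιL_coe : ∀ y, ((ιL y : ((LinearMap.ker (W : K →ₗ[ℂ] H))ᗮ : Submodule ℂ K)) : K) = (y : K) :=
    fun y => rfl
  have h_e : IsUniformInducing ιL := ι.isometry.isUniformInducing
  have h_dense : DenseRange ιL := by
    intro y
    have hy : (y : K) ∈ closure ((LinearMap.range Sl : Submodule ℂ K) : Set K) := by
      have hy0 : (y : K) ∈ (LinearMap.range Sl).topologicalClosure := by
        rw [hrangeSl, hDR]; exact y.2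
      rwa [← Submodule.topologicalClosure_coe]
    obtain ⟨seq, hseqmem, hseqlim⟩ := mem_closure_iff_seq_limit.mp hy
    apply mem_closure_iff_seq_limit.mpr
    refine ⟨fun n => ιL ⟨seq n, hseqmem n⟩, fun n => ⟨_, rfl⟩, ?_⟩
    rw [tendsto_subtype_rng]
    exact hseqlim
  set Φ₁ : ((LinearMap.ker (W : K →ₗ[ℂ] H))ᗮ : Submodule ℂ K) →L[ℂ] R :=
    fL.extend ιL with hΦ₁
  have hΦι : ∀ y, Φ₁ (ιL y) = fL y := fun y =>
    ContinuousLinearMap.extend_eq fL h_dense h_e y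
  have hmemD : ∀ x : K, S x ∈ (LinearMap.ker (W : K →ₗ[ℂ] H))ᗮ := fun x =>
    hle2 (LinearMap.mem_range_self Sl x)
  have hΦS : ∀ x : K, Φ₁ ⟨S x, hmemD x⟩ = ⟨W x, hWR x⟩ := by
    intro x
    have h1 : (⟨S x, hmemD x⟩ : ((LinearMap.ker (W : K →ₗ[ℂ] H))ᗮ : Submodule ℂ K)) =
        ιL ⟨Sl x, LinearMap.mem_range_self _ x⟩ := rfl
    rw [h1, hΦι, hfL_apply, hf_apply]
    apply Subtype.ext
    exact hf₀_coe x
  have hΦnorm : ∀ y : ((LinearMap.ker (W : K →ₗ[ℂ] H))ᗮ : Submodule ℂ K), ‖Φ₁ y‖ = ‖y‖ := by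
    have heq : (fun y : ((LinearMap.ker (W : K →ₗ[ℂ] H))ᗮ : Submodule ℂ K) => ‖Φ₁ y‖) =
        (fun y : ((LinearMap.ker (W : K →ₗ[ℂ] H))ᗮ : Submodule ℂ K) => ‖y‖) := by
      refine Continuous.ext_on h_dense (Φ₁.continuous.norm) continuous_norm ?_
      rintro - ⟨y, rfl⟩
      show ‖Φ₁ (ιL y)‖ = ‖ιL y‖
      rw [hΦι, hfL_apply]
      calc ‖(f y : H)‖ = ‖y‖ := hf_norm y
        _ = ‖ιL y‖ := rfl
    exact fun y => congrFun heq y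
  have hiso : Isometry Φ₁ := AddMonoidHomClass.isometry_of_norm Φ₁ hΦnorm
  have hclosedrange : IsClosed (Set.range Φ₁) := hiso.isClosedEmbedding.isClosed_range
  have hsurj : Function.Surjective Φ₁ := by
    intro r
    have hsub : ((LinearMap.range (W : K →ₗ[ℂ] H) : Submodule ℂ H) : Set H) ⊆
        Subtype.val '' Set.range Φ₁ := by
      rintro - ⟨x, rfl⟩
      exact ⟨Φ₁ ⟨S x, hmemD x⟩, ⟨_, rfl⟩, by rw [hΦS]; rfl⟩
    have h1 : (r : H) ∈ closure (Subtype.val '' Set.range Φ₁) :=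
      closure_mono hsub (hRW r.2)
    obtain ⟨seq, hseqmem, hseqlim⟩ := mem_closure_iff_seq_limit.mp h1
    choose z hz1 hz2 using hseqmem
    have hzt : Filter.Tendsto z Filter.atTop (nhds r) := by
      rw [tendsto_subtype_rng]
      simpa only [hz2] using hseqlim
    have h3 : r ∈ closure (Set.range Φ₁) :=
      mem_closure_of_tendsto hzt (Filter.Eventually.of_forall hz1)
    rw [hclosedrange.closure_eq] at h3
    exact h3
  refine ⟨⟨Φ₁.toLinearMap, hΦnorm⟩, hsurj, ?_⟩
  intro u u' v v' hu1 hu2 hu3 hv3 hWu hWu' x hx hux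
  have hu1m : u * u' = 1 := hu1
  have hu2m : u' * u = 1 := hu2
  have hadjW : u.comp (ContinuousLinearMap.adjoint W) =
      (ContinuousLinearMap.adjoint W).comp v := by
    have h := congrArg ContinuousLinearMap.adjoint hWu'
    rw [ContinuousLinearMap.adjoint_comp, ContinuousLinearMap.adjoint_comp, hv3] at h
    rwa [show ContinuousLinearMap.adjoint u' = u from by rw [← hu3, adjoint_adjoint]] at h
  have hBu : B.comp u = u.comp B := by
    calc B.comp u = (ContinuousLinearMap.adjoint W).comp (W.comp u) := by
          rw [hBdef, ContinuousLinearMap.comp_assoc]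
      _ = (ContinuousLinearMap.adjoint W).comp (v.comp W) := by rw [hWu]
      _ = ((ContinuousLinearMap.adjoint W).comp v).comp W := by
          rw [ContinuousLinearMap.comp_assoc]
      _ = (u.comp (ContinuousLinearMap.adjoint W)).comp W := by rw [← hadjW]
      _ = u.comp B := by rw [ContinuousLinearMap.comp_assoc, hBdef]
  have hBum : B * u = u * B := hBu
  have hstar : star u = u' := by
    rw [ContinuousLinearMap.star_eq_adjoint, hu3]
  have hconj : CFC.sqrt B = u * S * star u := by
    apply CFC.sqrt_unique
    · rw [hstar]
      calc (u * S * u') * (u * S * u')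
          = u * (S * ((u' * u) * (S * u'))) := by simp only [mul_assoc]
        _ = u * (S * (S * u')) := by rw [hu2m, one_mul]
        _ = u * ((S * S) * u') := by rw [mul_assoc]
        _ = u * (B * u') := by rw [hSSm]
        _ = (u * B) * u' := by rw [mul_assoc]
        _ = (B * u) * u' := by rw [hBum]
        _ = B * (u * u') := by rw [mul_assoc]
        _ = B := by rw [hu1m, mul_one]
    · exact star_right_conjugate_nonneg hSpos u
  have hSum : S * u = u * S := by
    have h1 : S = u * S * u' := by rw [← hstar, ← hconj, hSdef]
    calc S * u = (u * S * u') * u := by rw [← h1]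
      _ = (u * S) * (u' * u) := by rw [mul_assoc]
      _ = u * S := by rw [hu2m, mul_one]
  have hSu : ∀ z : K, S (u z) = u (S z) := by
    intro z
    have := congrArg (fun (A : K →L[ℂ] K) => A z) hSum
    simpa [ContinuousLinearMap.mul_apply] using this
  have hmapsu : ∀ z ∈ ((LinearMap.ker (W : K →ₗ[ℂ] H))ᗮ : Submodule ℂ K), u z ∈ (LinearMap.ker (W : K →ₗ[ℂ] H))ᗮ := by
    intro z hz
    rw [Submodule.mem_orthogonal]
    intro m hm
    have hum : u' m ∈ LinearMap.ker (W : K →ₗ[ℂ] H) := by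
      rw [LinearMap.mem_ker]
      have h1 : W (u' m) = v' (W m) := by
        have := congrArg (fun (A : K →L[ℂ] H) => A m) hWu'
        simpa using this
      rw [LinearMap.mem_ker] at hm
      rw [ContinuousLinearMap.coe_coe, h1, show W m = 0 from hm, map_zero]
    have h2 : (inner ℂ m (u z) : ℂ) = inner ℂ (u' m) z := by
      conv_lhs => rw [show u = ContinuousLinearMap.adjoint u' from by
        rw [← hu3, adjoint_adjoint]]
      exact ContinuousLinearMap.adjoint_inner_right u' m z
    rw [h2]
    exact (Submodule.mem_orthogonal _ z).mp hz (u' m) hum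
  set du : ((LinearMap.ker (W : K →ₗ[ℂ] H))ᗮ : Submodule ℂ K) →L[ℂ] ((LinearMap.ker (W : K →ₗ[ℂ] H))ᗮ : Submodule ℂ K) :=
    { toLinearMap := (u : K →ₗ[ℂ] K).restrict hmapsu
      cont := Continuous.subtype_mk (u.continuous.comp continuous_subtype_val) _ } with hdu
  have hdu_coe : ∀ z : ((LinearMap.ker (W : K →ₗ[ℂ] H))ᗮ : Submodule ℂ K), ((du z : _) : K) = u (z : K) :=
    fun z => rfl
  have hcomm : (fun y : ((LinearMap.ker (W : K →ₗ[ℂ] H))ᗮ : Submodule ℂ K) => (Φ₁ (du y) : H)) =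
      (fun y : ((LinearMap.ker (W : K →ₗ[ℂ] H))ᗮ : Submodule ℂ K) => v (Φ₁ y)) := by
    refine Continuous.ext_on h_dense
      (continuous_subtype_val.comp (Φ₁.continuous.comp du.continuous))
      (v.continuous.comp (continuous_subtype_val.comp Φ₁.continuous)) ?_
    rintro - ⟨y, rfl⟩
    show (Φ₁ (du (ιL y)) : H) = v (Φ₁ (ιL y))
    obtain ⟨x0, hx0⟩ := y.2
    have h1 : du (ιL y) = ⟨S (u x0), hmemD (u x0)⟩ := by
      apply Subtype.ext
      rw [hdu_coe, hιL_coe, ← hx0]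
      exact (hSu x0).symm
    have h2 : ιL y = ⟨S x0, hmemD x0⟩ := by
      apply Subtype.ext
      rw [hιL_coe, ← hx0]
      rfl
    rw [h1, h2, hΦS, hΦS]
    show W (u x0) = v (W x0)
    have := congrArg (fun (A : K →L[ℂ] H) => A x0) hWu
    simpa using this
  have h3 : (⟨u x, hux⟩ : ((LinearMap.ker (W : K →ₗ[ℂ] H))ᗮ : Submodule ℂ K)) = du ⟨x, hx⟩ :=
    Subtype.ext rfl
  show (Φ₁ ⟨u x, hux⟩ : H) = v (Φ₁ ⟨x, hx⟩)
  rw [h3]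
  exact congrFun hcomm ⟨x, hx⟩

end MackeyAux

/-- A strongly continuous unitary representation of a topological group `G` on a
complex Hilbert space `H`. -/
structure UnitaryRep (G : Type*) [Group G] [TopologicalSpace G]
    (H : Type*) [NormedAddCommGroup H] [InnerProductSpace ℂ H] where
  ρ : G → (H →L[ℂ] H)
  map_one : ρ 1 = ContinuousLinearMap.id ℂ H
  map_mul : ∀ g₁ g₂ : G, ρ (g₁ * g₂) = (ρ g₁).comp (ρ g₂)
  inner_map : ∀ (g : G) (x y : H), (inner ℂ (ρ g x) (ρ g y) : ℂ) = inner ℂ x y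
  strong_continuous : ∀ x : H, Continuous fun g : G => ρ g x

/-- **Mackey's Schur Lemma.** If `T` is a closed, densely defined, `G`-equivariant
operator from a unitary representation `(π, Hπ)` to a unitary representation `(τ, Hτ)`,
then there is a surjective `G`-equivariant linear isometry from `(ker T)ᗮ` onto the
closure of the range of `T`. -/
theorem mackey_schur_lemma
    {G : Type*} [Group G] [TopologicalSpace G]
    {Hπ : Type*} [NormedAddCommGroup Hπ] [InnerProductSpace ℂ Hπ] [CompleteSpace Hπ]
    {Hτ : Type*} [NormedAddCommGroup Hτ] [InnerProductSpace ℂ Hτ] [CompleteSpace Hτ]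
    (π : UnitaryRep G Hπ) (τ : UnitaryRep G Hτ)
    (V : Submodule ℂ Hπ) (hVdense : Dense (V : Set Hπ))
    (hVinv : ∀ (g : G), ∀ v ∈ V, π.ρ g v ∈ V)
    (T : V →ₗ[ℂ] Hτ)
    (hclosed : IsClosed {p : Hπ × Hτ | ∃ hv : p.1 ∈ V, T ⟨p.1, hv⟩ = p.2})
    (hequiv : ∀ (g : G) (v : V) (hgv : π.ρ g (v : Hπ) ∈ V),
      T ⟨π.ρ g (v : Hπ), hgv⟩ = τ.ρ g (T v)) :
    ∃ Φ : (((LinearMap.ker T).map V.subtype)ᗮ : Submodule ℂ Hπ) →ₗᵢ[ℂ]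
        ((LinearMap.range T).topologicalClosure : Submodule ℂ Hτ),
      Function.Surjective Φ ∧
      ∀ (g : G) (x : Hπ) (hx : x ∈ ((LinearMap.ker T).map V.subtype)ᗮ)
        (hgx : π.ρ g x ∈ ((LinearMap.ker T).map V.subtype)ᗮ),
        (Φ ⟨π.ρ g x, hgx⟩ : Hτ) = τ.ρ g (Φ ⟨x, hx⟩ : Hτ) := by
  classical
  set M : Submodule ℂ Hπ := (LinearMap.ker T).map V.subtype with hM
  set R : Submodule ℂ Hτ := (LinearMap.range T).topologicalClosure with hRdef
  let eE : WithLp 2 (Hπ × Hτ) ≃L[ℂ] Hπ × Hτ := WithLp.prodContinuousLinearEquiv 2 ℂ Hπ Hτ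
  -- the graph of `T` as a closed submodule of the L² product
  set Γ : Submodule ℂ (WithLp 2 (Hπ × Hτ)) :=
    { carrier := {p : WithLp 2 (Hπ × Hτ) | ∃ hv : p.fst ∈ V, T ⟨p.fst, hv⟩ = p.snd}
      add_mem' := by
        rintro a b ⟨ha, hTa⟩ ⟨hb, hTb⟩
        have hab : (a + b).fst ∈ V := by
          rw [WithLp.add_fst]; exact V.add_mem ha hb
        refine ⟨hab, ?_⟩
        have h1 : (⟨(a + b).fst, hab⟩ : V) = ⟨a.fst, ha⟩ + ⟨b.fst, hb⟩ := by
          apply Subtype.ext; simp [WithLp.add_fst]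
        rw [h1, map_add, hTa, hTb, WithLp.add_snd]
      zero_mem' := by
        have h0 : (0 : WithLp 2 (Hπ × Hτ)).fst ∈ V := by
          rw [WithLp.zero_fst]; exact V.zero_mem
        refine ⟨h0, ?_⟩
        have h1 : (⟨(0 : WithLp 2 (Hπ × Hτ)).fst, h0⟩ : V) = 0 := by
          apply Subtype.ext; simp [WithLp.zero_fst]
        rw [h1, map_zero, WithLp.zero_snd]
      smul_mem' := by
        rintro c a ⟨ha, hTa⟩
        have hca : (c • a).fst ∈ V := by
          rw [WithLp.smul_fst]; exact V.smul_mem c ha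
        refine ⟨hca, ?_⟩
        have h1 : (⟨(c • a).fst, hca⟩ : V) = c • ⟨a.fst, ha⟩ := by
          apply Subtype.ext; simp [WithLp.smul_fst]
        rw [h1, map_smul, hTa, WithLp.smul_snd] } with hΓdef
  have hΓclosed : IsClosed (Γ : Set (WithLp 2 (Hπ × Hτ))) := by
    have hpre : (Γ : Set (WithLp 2 (Hπ × Hτ))) =
        (eE : WithLp 2 (Hπ × Hτ) → Hπ × Hτ) ⁻¹'
          {p : Hπ × Hτ | ∃ hv : p.1 ∈ V, T ⟨p.1, hv⟩ = p.2} := rfl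
    rw [hpre]
    exact hclosed.preimage eE.continuous
  haveI : CompleteSpace Γ := hΓclosed.completeSpace_coe
  set p₁ : Γ →L[ℂ] Hπ :=
    (ContinuousLinearMap.fst ℂ Hπ Hτ).comp
      ((eE.toContinuousLinearMap).comp Γ.subtypeL) with hp₁def
  set p₂ : Γ →L[ℂ] Hτ :=
    (ContinuousLinearMap.snd ℂ Hπ Hτ).comp
      ((eE.toContinuousLinearMap).comp Γ.subtypeL) with hp₂def
  have hp₁ : ∀ u : Γ, p₁ u = (u : WithLp 2 (Hπ × Hτ)).fst := fun u => rfl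
  have hp₂ : ∀ u : Γ, p₂ u = (u : WithLp 2 (Hπ × Hτ)).snd := fun u => rfl
  have hinnerΓ : ∀ u w : Γ,
      (inner ℂ u w : ℂ) = inner ℂ (p₁ u) (p₁ w) + inner ℂ (p₂ u) (p₂ w) := fun u w => rfl
  -- the element of the graph corresponding to `v : V`
  have hmemuOf : ∀ v : V, (eE.symm ((v : Hπ), T v)) ∈ Γ := by
    intro v
    have h1 : (eE.symm ((v : Hπ), T v)).fst = (v : Hπ) := rfl
    have h2 : (eE.symm ((v : Hπ), T v)).snd = T v := rfl
    refine ⟨h1 ▸ v.2, ?_⟩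
    rw [show (⟨(eE.symm ((v : Hπ), T v)).fst, h1 ▸ v.2⟩ : V) = v from Subtype.ext h1]
    exact h2.symm
  set uOf : V → Γ := fun v => ⟨eE.symm ((v : Hπ), T v), hmemuOf v⟩ with huOf
  have hp₁uOf : ∀ v : V, p₁ (uOf v) = (v : Hπ) := fun v => rfl
  have hp₂uOf : ∀ v : V, p₂ (uOf v) = T v := fun v => rfl
  set W : Hπ →L[ℂ] Hτ := p₂.comp (ContinuousLinearMap.adjoint p₁) with hWdef
  have hW : ∀ x : Hπ, W x = p₂ (ContinuousLinearMap.adjoint p₁ x) := fun x => rfl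
  -- p₁ is injective
  have hp₁ker : ∀ u : Γ, p₁ u = 0 → u = 0 := by
    intro u h
    obtain ⟨hv, hTu⟩ := u.2
    have h1 : (u : WithLp 2 (Hπ × Hτ)).fst = 0 := by rw [← hp₁]; exact h
    have h2 : (u : WithLp 2 (Hπ × Hτ)).snd = 0 := by
      rw [← hTu]
      have h3 : (⟨(u : WithLp 2 (Hπ × Hτ)).fst, hv⟩ : V) = 0 := Subtype.ext h1
      rw [h3, map_zero]
    apply Subtype.ext
    show (u : WithLp 2 (Hπ × Hτ)) = 0
    apply eE.injective
    rw [map_zero]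
    exact Prod.ext h1 h2
  -- adjoint of p₁ is injective
  have hker_adj : ∀ x : Hπ, ContinuousLinearMap.adjoint p₁ x = 0 → x = 0 := by
    intro x hx
    refine mackey_eq_zero_of_inner V hVdense x ?_
    intro vv hvv
    have h1 : (inner ℂ x vv : ℂ) = inner ℂ (ContinuousLinearMap.adjoint p₁ x) (uOf ⟨vv, hvv⟩) := by
      rw [ContinuousLinearMap.adjoint_inner_left, hp₁uOf]
    rw [h1, hx, inner_zero_left]
  -- fixed points of `adjoint p₁ ∘ p₁` on the kernel of `p₂`
  have hfix : ∀ u : Γ, p₂ u = 0 → ContinuousLinearMap.adjoint p₁ (p₁ u) = u := by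
    intro u h
    apply ext_inner_right ℂ
    intro w
    rw [ContinuousLinearMap.adjoint_inner_left, hinnerΓ u w, h, inner_zero_left, add_zero]
  -- the kernel of W is M
  have hkerW : LinearMap.ker (W : Hπ →ₗ[ℂ] Hτ) = M := by
    ext x
    rw [LinearMap.mem_ker]
    constructor
    · intro h
      have hpu : p₂ (ContinuousLinearMap.adjoint p₁ x) = 0 := h
      have h1 : ContinuousLinearMap.adjoint p₁ (p₁ (ContinuousLinearMap.adjoint p₁ x)) =
          ContinuousLinearMap.adjoint p₁ x := hfix _ hpu
      have h2 : p₁ (ContinuousLinearMap.adjoint p₁ x) = x := by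
        have h3 : ContinuousLinearMap.adjoint p₁ (p₁ (ContinuousLinearMap.adjoint p₁ x) - x)
            = 0 := by rw [map_sub, h1, sub_self]
        have h4 := hker_adj _ h3
        rwa [sub_eq_zero] at h4
      obtain ⟨hv, hTu⟩ := (ContinuousLinearMap.adjoint p₁ x).2
      have hxV : x ∈ V := by rw [← h2, hp₁]; exact hv
      refine Submodule.mem_map.mpr ⟨⟨x, hxV⟩, ?_, rfl⟩
      rw [LinearMap.mem_ker]
      have h5 : (⟨x, hxV⟩ : V) =
          ⟨((ContinuousLinearMap.adjoint p₁ x : Γ) : WithLp 2 (Hπ × Hτ)).fst, hv⟩ := by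
        apply Subtype.ext
        show x = ((ContinuousLinearMap.adjoint p₁ x : Γ) : WithLp 2 (Hπ × Hτ)).fst
        rw [← hp₁]
        exact h2.symm
      calc T ⟨x, hxV⟩
          = T ⟨((ContinuousLinearMap.adjoint p₁ x : Γ) : WithLp 2 (Hπ × Hτ)).fst, hv⟩ :=
            congrArg T h5
        _ = ((ContinuousLinearMap.adjoint p₁ x : Γ) : WithLp 2 (Hπ × Hτ)).snd := hTu
        _ = 0 := by rw [← hp₂]; exact hpu
    · intro hx
      obtain ⟨v₀, hv₀, rfl⟩ := Submodule.mem_map.mp hx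
      have hT0 : T v₀ = 0 := LinearMap.mem_ker.mp hv₀
      have hpu2 : p₂ (uOf v₀) = 0 := by rw [hp₂uOf, hT0]
      have h1 : ContinuousLinearMap.adjoint p₁ ((v₀ : Hπ)) = uOf v₀ := by
        have h2 := hfix (uOf v₀) hpu2
        rwa [hp₁uOf] at h2
      show W ((V.subtype : V →ₗ[ℂ] Hπ) v₀) = 0
      rw [hW]
      show p₂ (ContinuousLinearMap.adjoint p₁ ((v₀ : Hπ))) = 0
      rw [h1, hpu2]
  -- range facts
  have hWR : ∀ x : Hπ, W x ∈ R := by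
    intro x
    obtain ⟨hv, hTu⟩ := (ContinuousLinearMap.adjoint p₁ x).2
    have h1 : W x = T ⟨((ContinuousLinearMap.adjoint p₁ x : Γ) : WithLp 2 (Hπ × Hτ)).fst, hv⟩ := by
      rw [hW, hp₂, hTu]
    rw [h1, hRdef]
    exact Submodule.le_topologicalClosure _ (LinearMap.mem_range_self T _)
  have hRcl : IsClosed (R : Set Hτ) := Submodule.isClosed_topologicalClosure _
  have hRW : (R : Set Hτ) ⊆ closure ((LinearMap.range (W : Hπ →ₗ[ℂ] Hτ) : Submodule ℂ Hτ) : Set Hτ) := by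
    have hkerp₁ : LinearMap.ker (p₁ : Γ →ₗ[ℂ] Hπ) = ⊥ := by
      ext u
      rw [LinearMap.mem_ker, Submodule.mem_bot]
      exact ⟨hp₁ker u, fun h => by rw [h, map_zero]⟩
    have hadjdense : (LinearMap.range (ContinuousLinearMap.adjoint p₁ : Hπ →ₗ[ℂ] Γ)).topologicalClosure
        = ⊤ := by
      rw [← Submodule.orthogonal_orthogonal_eq_closure, mackey_range_adjoint_orthogonal p₁,
        hkerp₁, Submodule.bot_orthogonal_eq_top]
    have hTsub : ((LinearMap.range T : Submodule ℂ Hτ) : Set Hτ) ⊆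
        closure ((LinearMap.range (W : Hπ →ₗ[ℂ] Hτ) : Submodule ℂ Hτ) : Set Hτ) := by
      rintro - ⟨v, rfl⟩
      have h1 : uOf v ∈
          closure ((LinearMap.range (ContinuousLinearMap.adjoint p₁ : Hπ →ₗ[ℂ] Γ) : Submodule ℂ Γ) : Set Γ) := by
        rw [← Submodule.topologicalClosure_coe, hadjdense]
        trivial
      have hmaps : Set.MapsTo p₂
          ((LinearMap.range (ContinuousLinearMap.adjoint p₁ : Hπ →ₗ[ℂ] Γ) : Submodule ℂ Γ) : Set Γ)
          ((LinearMap.range (W : Hπ →ₗ[ℂ] Hτ) : Submodule ℂ Hτ) : Set Hτ) := by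
        rintro - ⟨x, rfl⟩
        exact ⟨x, rfl⟩
      have h2 := map_mem_closure p₂.continuous h1 hmaps
      rwa [hp₂uOf] at h2
    intro r hr
    have hr' : r ∈ closure ((LinearMap.range T : Submodule ℂ Hτ) : Set Hτ) := by
      rw [hRdef] at hr
      rwa [← Submodule.topologicalClosure_coe]
    have := closure_mono hTsub hr'
    rwa [closure_closure] at this
  -- apply the phase construction
  rw [show M = LinearMap.ker (W : Hπ →ₗ[ℂ] Hτ) from hkerW.symm]
  obtain ⟨Φ, hsurj, hequi⟩ := mackey_phase_exists W R hWR hRcl hRW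
  refine ⟨Φ, hsurj, ?_⟩
  intro g x hx hgx
  -- unitarity framework
  have hcompπ : ∀ g₁ g₂ : G, (π.ρ g₁).comp (π.ρ g₂) = π.ρ (g₁ * g₂) :=
    fun g₁ g₂ => (π.map_mul g₁ g₂).symm
  have hcompτ : ∀ g₁ g₂ : G, (τ.ρ g₁).comp (τ.ρ g₂) = τ.ρ (g₁ * g₂) :=
    fun g₁ g₂ => (τ.map_mul g₁ g₂).symm
  have hπ1 : ∀ g0 : G, (π.ρ g0).comp (π.ρ g0⁻¹) = 1 := by
    intro g0
    rw [hcompπ, mul_inv_cancel, π.map_one]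
    rfl
  have hπ2 : ∀ g0 : G, (π.ρ g0⁻¹).comp (π.ρ g0) = 1 := by
    intro g0
    rw [hcompπ, inv_mul_cancel, π.map_one]
    rfl
  have hτ1 : ∀ g0 : G, (τ.ρ g0).comp (τ.ρ g0⁻¹) = 1 := by
    intro g0
    rw [hcompτ, mul_inv_cancel, τ.map_one]
    rfl
  have hτ2 : ∀ g0 : G, (τ.ρ g0⁻¹).comp (τ.ρ g0) = 1 := by
    intro g0
    rw [hcompτ, inv_mul_cancel, τ.map_one]
    rfl
  have happlyπ : ∀ (g0 : G) (z : Hπ), π.ρ g0⁻¹ (π.ρ g0 z) = z := by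
    intro g0 z
    have := congrArg (fun (A : Hπ →L[ℂ] Hπ) => A z) (hπ2 g0)
    simpa using this
  have happlyπ' : ∀ (g0 : G) (z : Hπ), π.ρ g0 (π.ρ g0⁻¹ z) = z := by
    intro g0 z
    have := congrArg (fun (A : Hπ →L[ℂ] Hπ) => A z) (hπ1 g0)
    simpa using this
  have happlyτ : ∀ (g0 : G) (z : Hτ), τ.ρ g0⁻¹ (τ.ρ g0 z) = z := by
    intro g0 z
    have := congrArg (fun (A : Hτ →L[ℂ] Hτ) => A z) (hτ2 g0)
    simpa using this
  have hadjπ : ∀ g0 : G, ContinuousLinearMap.adjoint (π.ρ g0) = π.ρ g0⁻¹ := by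
    intro g0
    apply ContinuousLinearMap.ext
    intro z
    apply ext_inner_right ℂ
    intro y
    rw [ContinuousLinearMap.adjoint_inner_left]
    calc (inner ℂ z (π.ρ g0 y) : ℂ)
        = inner ℂ (π.ρ g0⁻¹ z) (π.ρ g0⁻¹ (π.ρ g0 y)) := (π.inner_map g0⁻¹ z (π.ρ g0 y)).symm
      _ = inner ℂ (π.ρ g0⁻¹ z) y := by rw [happlyπ]
  have hadjτ : ∀ g0 : G, ContinuousLinearMap.adjoint (τ.ρ g0) = τ.ρ g0⁻¹ := by
    intro g0
    apply ContinuousLinearMap.ext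
    intro z
    apply ext_inner_right ℂ
    intro y
    rw [ContinuousLinearMap.adjoint_inner_left]
    calc (inner ℂ z (τ.ρ g0 y) : ℂ)
        = inner ℂ (τ.ρ g0⁻¹ z) (τ.ρ g0⁻¹ (τ.ρ g0 y)) := (τ.inner_map g0⁻¹ z (τ.ρ g0 y)).symm
      _ = inner ℂ (τ.ρ g0⁻¹ z) y := by rw [happlyτ]
  -- the action of G on the graph Γ
  set Pg : G → (WithLp 2 (Hπ × Hτ)) →L[ℂ] (WithLp 2 (Hπ × Hτ)) := fun g0 =>
    (eE.symm.toContinuousLinearMap).comp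
      (((π.ρ g0).prodMap (τ.ρ g0)).comp eE.toContinuousLinearMap) with hPgdef
  have hPgfst : ∀ (g0 : G) (pp : WithLp 2 (Hπ × Hτ)), (Pg g0 pp).fst = π.ρ g0 pp.fst :=
    fun g0 pp => rfl
  have hPgsnd : ∀ (g0 : G) (pp : WithLp 2 (Hπ × Hτ)), (Pg g0 pp).snd = τ.ρ g0 pp.snd :=
    fun g0 pp => rfl
  have hPgΓ : ∀ g0 : G, ∀ pp ∈ Γ, Pg g0 pp ∈ Γ := by
    rintro g0 pp ⟨hv, hT⟩
    have hfstV : (Pg g0 pp).fst ∈ V := by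
      rw [hPgfst]; exact hVinv g0 _ hv
    refine ⟨hfstV, ?_⟩
    have h1 : (⟨(Pg g0 pp).fst, hfstV⟩ : V) = ⟨π.ρ g0 pp.fst, hPgfst g0 pp ▸ hfstV⟩ := by
      apply Subtype.ext
      exact hPgfst g0 pp
    rw [h1, hequiv g0 ⟨pp.fst, hv⟩ _, hT, hPgsnd]
  set gΓ : G → Γ →L[ℂ] Γ := fun g0 =>
    { toLinearMap := ((Pg g0) : WithLp 2 (Hπ × Hτ) →ₗ[ℂ] WithLp 2 (Hπ × Hτ)).restrict (hPgΓ g0)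
      cont := Continuous.subtype_mk ((Pg g0).continuous.comp continuous_subtype_val) _ }
    with hgΓdef
  have hgΓ_coe : ∀ (g0 : G) (u : Γ), ((gΓ g0 u : Γ) : WithLp 2 (Hπ × Hτ)) =
      Pg g0 (u : WithLp 2 (Hπ × Hτ)) := fun g0 u => rfl
  have hp₁g : ∀ (g0 : G) (u : Γ), p₁ (gΓ g0 u) = π.ρ g0 (p₁ u) := by
    intro g0 u
    rw [hp₁, hp₁, hgΓ_coe]
    exact hPgfst g0 _
  have hp₂g : ∀ (g0 : G) (u : Γ), p₂ (gΓ g0 u) = τ.ρ g0 (p₂ u) := by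
    intro g0 u
    rw [hp₂, hp₂, hgΓ_coe]
    exact hPgsnd g0 _
  have hgΓinv : ∀ (g0 : G) (u : Γ), gΓ g0 (gΓ g0⁻¹ u) = u := by
    intro g0 u
    apply Subtype.ext
    apply eE.injective
    apply Prod.ext
    · show (gΓ g0 (gΓ g0⁻¹ u) : WithLp 2 (Hπ × Hτ)).fst = (u : WithLp 2 (Hπ × Hτ)).fst
      rw [← hp₁, ← hp₁, hp₁g, hp₁g, happlyπ']
    · show (gΓ g0 (gΓ g0⁻¹ u) : WithLp 2 (Hπ × Hτ)).snd = (u : WithLp 2 (Hπ × Hτ)).snd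
      rw [← hp₂, ← hp₂, hp₂g, hp₂g]
      have := congrArg (fun (A : Hτ →L[ℂ] Hτ) => A (p₂ u)) (hτ1 g0)
      simpa using this
  have hgΓinner : ∀ (g0 : G) (u w : Γ), (inner ℂ (gΓ g0 u) (gΓ g0 w) : ℂ) = inner ℂ u w := by
    intro g0 u w
    rw [hinnerΓ, hinnerΓ, hp₁g, hp₁g, hp₂g, hp₂g, π.inner_map, τ.inner_map]
  have hadj₁g : ∀ (g0 : G) (z : Hπ),
      ContinuousLinearMap.adjoint p₁ (π.ρ g0 z) = gΓ g0 (ContinuousLinearMap.adjoint p₁ z) := by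
    intro g0 z
    apply ext_inner_right ℂ
    intro w
    rw [ContinuousLinearMap.adjoint_inner_left]
    calc (inner ℂ (π.ρ g0 z) (p₁ w) : ℂ)
        = inner ℂ (π.ρ g0⁻¹ (π.ρ g0 z)) (π.ρ g0⁻¹ (p₁ w)) := (π.inner_map g0⁻¹ _ _).symm
      _ = inner ℂ z (π.ρ g0⁻¹ (p₁ w)) := by rw [happlyπ]
      _ = inner ℂ z (p₁ (gΓ g0⁻¹ w)) := by rw [hp₁g]
      _ = inner ℂ (ContinuousLinearMap.adjoint p₁ z) (gΓ g0⁻¹ w) :=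
          (ContinuousLinearMap.adjoint_inner_left p₁ _ _).symm
      _ = inner ℂ (gΓ g0 (ContinuousLinearMap.adjoint p₁ z)) (gΓ g0 (gΓ g0⁻¹ w)) :=
          (hgΓinner g0 _ _).symm
      _ = inner ℂ (gΓ g0 (ContinuousLinearMap.adjoint p₁ z)) w := by rw [hgΓinv]
  have hWg : ∀ g0 : G, W.comp (π.ρ g0) = (τ.ρ g0).comp W := by
    intro g0
    apply ContinuousLinearMap.ext
    intro z
    show W (π.ρ g0 z) = τ.ρ g0 (W z)
    rw [hW, hW, hadj₁g, hp₂g]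
  exact hequi (π.ρ g) (π.ρ g⁻¹) (τ.ρ g) (τ.ρ g⁻¹) (hπ1 g) (hπ2 g) (hadjπ g)
    (by rw [hadjτ g⁻¹, inv_inv]) (hWg g) (hWg g⁻¹) x hx hgx
end

section
/- Let p ≥ 0 and q ≥ 1 be natural numbers. Let L be a finite list of GGP symbols that is a GGP pattern, and suppose the multiplicities of the four symbols in L are: exactly q symbols (first source, +), exactly p symbols (first source, −), exactly q − 1 symbols (second source, +), and exactly p symbols (second source, −). Then L is nonempty and its first entry is either (first source, +) or (second source, −); in the notation of signs, the pattern must start with + or with ⊖. (This is the Lemma that the interlacing sign pattern of Harish-Chandra parameters (χ, z) of U(q,p) and (η, t) of U(q−1,p) satisfying the GGP interlacing relation must begin with + for (χ₁, +1) or ⊖ for (η₁, −1).) -/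
/-- A GGP symbol: a pair `(s, ε)` where `s : Bool` records the source sequence
(`false` = first source, `true` = second source) and `ε : Bool` records the sign
(`true` = `+`, `false` = `−`). -/
abbrev GGPSymbol := Bool × Bool

/-- An ordered pair of GGP symbols is allowed iff they have the same source exactly
when they have different signs. The allowed adjacent pairs are exactly
`(⊕ +), (+ ⊕), (− ⊖), (⊖ −), (+ −), (− +), (⊕ ⊖), (⊖ ⊕)`. -/
def GGPAllowed (a b : GGPSymbol) : Prop := a.1 = b.1 ↔ a.2 ≠ b.2

/-- A list of GGP symbols is a GGP pattern if every adjacent pair is allowed. -/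
def IsGGPPattern (L : List GGPSymbol) : Prop := List.Chain' GGPAllowed L

/-- The class of a GGP symbol: `true` for `+` and `⊖`, `false` for `−` and `⊕`. -/
def ggpClass (x : GGPSymbol) : Bool := xor x.1 x.2

lemma ggp_allowed_class {a b : GGPSymbol} (h : GGPAllowed a b) :
    ggpClass a ≠ ggpClass b := by
  obtain ⟨a1, a2⟩ := a
  obtain ⟨b1, b2⟩ := b
  unfold GGPAllowed at h
  cases a1 <;> cases a2 <;> cases b1 <;> cases b2 <;> simp_all [ggpClass]

lemma alt_count : ∀ (M : List Bool), M.Chain' (· ≠ ·) → ∀ b, M.head? = some b →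
    M.count (!b) ≤ M.count b ∧ M.count b ≤ M.count (!b) + 1 := by
  intro M
  induction M with
  | nil => intro _ b hb; simp at hb
  | cons x rest ih =>
    intro hch b hb
    simp at hb
    subst hb
    cases rest with
    | nil => cases x <;> simp [List.count_cons] <;> omega
    | cons y rest' =>
      rw [List.Chain', List.isChain_cons_cons] at hch
      have hy : y = !x := by cases x <;> cases y <;> simp_all
      have := ih hch.2 y (by simp)
      subst hy
      simp only [List.count_cons] at *
      cases x <;> simp_all <;> omega

lemma count_class_true : ∀ (L : List GGPSymbol),
    (L.map ggpClass).count true = L.count (false, true) + L.count (true, false) := by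
  intro L
  induction L with
  | nil => simp
  | cons x rest ih =>
    obtain ⟨x1, x2⟩ := x
    cases x1 <;> cases x2 <;>
      simp_all [List.count_cons, ggpClass] <;> omega

lemma count_class_false : ∀ (L : List GGPSymbol),
    (L.map ggpClass).count false = L.count (false, false) + L.count (true, true) := by
  intro L
  induction L with
  | nil => simp
  | cons x rest ih =>
    obtain ⟨x1, x2⟩ := x
    cases x1 <;> cases x2 <;>
      simp_all [List.count_cons, ggpClass] <;> omega

/-- A GGP pattern with `q` symbols `(first source, +)`, `p` symbols `(first source, −)`,
`q − 1` symbols `(second source, +)` and `p` symbols `(second source, −)` (with `q ≥ 1`)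
is nonempty and starts with `(first source, +)` or `(second source, −)`, i.e. with `+`
or with `⊖`. -/
theorem ggp_pattern_head (p q : ℕ) (hq : 1 ≤ q) (L : List GGPSymbol)
    (hL : IsGGPPattern L)
    (hcount₁ : L.count ((false, true) : GGPSymbol) = q)
    (hcount₂ : L.count ((false, false) : GGPSymbol) = p)
    (hcount₃ : L.count ((true, true) : GGPSymbol) = q - 1)
    (hcount₄ : L.count ((true, false) : GGPSymbol) = p) :
    L ≠ [] ∧
    (L.head? = some ((false, true) : GGPSymbol) ∨
     L.head? = some ((true, false) : GGPSymbol)) := by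
  have hT : (L.map ggpClass).count true = q + p := by
    rw [count_class_true]; omega
  have hF : (L.map ggpClass).count false = p + (q - 1) := by
    rw [count_class_false]; omega
  have hchain : (L.map ggpClass).Chain' (· ≠ ·) := by
    rw [List.Chain', List.isChain_map]
    exact hL.imp (fun a b h => ggp_allowed_class h)
  cases L with
  | nil => simp at hT; omega
  | cons x rest =>
    refine ⟨by simp, ?_⟩
    obtain ⟨x1, x2⟩ := x
    have hhead : ((x1, x2) :: rest : List GGPSymbol).map ggpClass
        = ggpClass (x1, x2) :: rest.map ggpClass := by simp
    have halt := alt_count _ hchain (ggpClass (x1, x2)) (by simp)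
    have hclass : ggpClass (x1, x2) = true := by
      by_contra h
      simp only [Bool.not_eq_true] at h
      rw [h] at halt
      simp only [Bool.not_false] at halt
      simp only [List.map_cons] at hT hF halt
      omega
    cases x1 <;> cases x2 <;> simp_all [ggpClass]
end

section
/- Let q ≥ s ≥ 1 be natural numbers and let a_1 ≥ a_2 ≥ … ≥ a_q ≥ 1 and b_1 ≥ b_2 ≥ … ≥ b_s ≥ 1 be real numbers. Then ∏_{i=1}^{q} ∏_{j=1}^{s} (a_i² + b_j² + a_i⁻² + b_j⁻²)⁻¹ ≤ ∏_{i=1}^{s} (a_i + a_i⁻¹)^(2i − 2s − 2 + 1/2) · ∏_{j=1}^{s} (b_j + b_j⁻¹)^(2j − 2q − 1/2). (This is the key product estimate, in the case q ≥ s ≥ 1, used to prove that the restricted matrix coefficients of the oscillator representation ω(n,n;r,s) are integrable against L² functions on Ũ(p,q).) -/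
open Finset Real

private lemma osc_two_le (a : ℝ) (ha : 1 ≤ a) : 2 ≤ a + a⁻¹ := by
  have h0 : 0 < a := lt_of_lt_of_le one_pos ha
  have h1 : a * a⁻¹ = 1 := mul_inv_cancel₀ h0.ne'
  nlinarith [sq_nonneg (a - 1), inv_pos.2 h0]

private lemma osc_sq_eq (a : ℝ) (ha : 1 ≤ a) :
    a ^ 2 + (a ^ 2)⁻¹ = (a + a⁻¹) ^ 2 - 2 := by
  have h0 : a ≠ 0 := by positivity
  field_simp
  ring

private lemma osc_key (A B α β : ℝ) (hA : 2 ≤ A) (hB : 2 ≤ B)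
    (hα : 0 ≤ α) (hβ : 0 ≤ β) (hαβ : α + β = 2) :
    A ^ α * B ^ β ≤ A ^ 2 + B ^ 2 - 4 := by
  have hA0 : (0:ℝ) ≤ A := by linarith
  have hB0 : (0:ℝ) ≤ B := by linarith
  have h1 : (A ^ 2) ^ (α / 2) * (B ^ 2) ^ (β / 2)
      ≤ (α / 2) * A ^ 2 + (β / 2) * B ^ 2 :=
    Real.geom_mean_le_arith_mean2_weighted (by linarith) (by linarith)
      (by positivity) (by positivity) (by linarith)
  have e1 : (A ^ 2 : ℝ) ^ (α / 2) = A ^ α := by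
    rw [← Real.rpow_natCast A 2, ← Real.rpow_mul hA0]
    congr 1; ring
  have e2 : (B ^ 2 : ℝ) ^ (β / 2) = B ^ β := by
    rw [← Real.rpow_natCast B 2, ← Real.rpow_mul hB0]
    congr 1; ring
  rw [e1, e2] at h1
  obtain rfl : β = 2 - α := by linarith
  have hA2 : (4:ℝ) ≤ A ^ 2 := by nlinarith
  have hB2 : (4:ℝ) ≤ B ^ 2 := by nlinarith
  have k1 := mul_le_mul_of_nonneg_left hA2 (show (0:ℝ) ≤ (2 - α) / 2 by linarith)
  have k2 := mul_le_mul_of_nonneg_left hB2 (show (0:ℝ) ≤ α / 2 by linarith)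
  linarith

private lemma osc_key_inv (a b α β : ℝ) (ha : 1 ≤ a) (hb : 1 ≤ b)
    (hα : 0 ≤ α) (hβ : 0 ≤ β) (hαβ : α + β = 2) :
    (a ^ 2 + b ^ 2 + (a ^ 2)⁻¹ + (b ^ 2)⁻¹)⁻¹
      ≤ (a + a⁻¹) ^ (-α) * (b + b⁻¹) ^ (-β) := by
  have hA : 2 ≤ a + a⁻¹ := osc_two_le a ha
  have hB : 2 ≤ b + b⁻¹ := osc_two_le b hb
  have hA0 : (0:ℝ) < a + a⁻¹ := by linarith
  have hB0 : (0:ℝ) < b + b⁻¹ := by linarith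
  rw [Real.rpow_neg hA0.le, Real.rpow_neg hB0.le, ← mul_inv]
  have hpos : 0 < (a + a⁻¹) ^ α * (b + b⁻¹) ^ β := by positivity
  apply inv_anti₀ hpos
  have hle := osc_key _ _ _ _ hA hB hα hβ hαβ
  have e1 := osc_sq_eq a ha
  have e2 := osc_sq_eq b hb
  linarith

private lemma osc_sum_aux (c : ℝ) (n i : ℕ) (h : i < n) :
    ∑ j ∈ Finset.range n, (if i < j then (2:ℝ) else if i = j then c else 0)
      = 2 * n - 2 * i - 2 + c := by
  induction n with
  | zero => omega
  | succ m ih =>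
    rcases Nat.lt_or_ge i m with h' | h'
    · rw [Finset.sum_range_succ, ih h', if_pos h']
      push_cast; ring
    · have him : i = m := by omega
      subst him
      rw [Finset.sum_range_succ, if_neg (lt_irrefl _), if_pos rfl]
      have hz : ∑ j ∈ Finset.range i,
          (if i < j then (2:ℝ) else if i = j then c else 0) = 0 := by
        apply Finset.sum_eq_zero
        intro j hj
        rw [Finset.mem_range] at hj
        rw [if_neg (by omega), if_neg (by omega)]
      rw [hz]
      push_cast; ring

/-- The key product estimate (case `q ≥ s ≥ 1`) used in the matrix coefficient
estimates for the oscillator representation `ω(n,n;r,s)`: for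
`a₁ ≥ a₂ ≥ … ≥ a_q ≥ 1` and `b₁ ≥ b₂ ≥ … ≥ b_s ≥ 1`,
`∏_{i=1}^{q} ∏_{j=1}^{s} (a_i² + b_j² + a_i⁻² + b_j⁻²)⁻¹
  ≤ ∏_{i=1}^{s} (a_i + a_i⁻¹)^(2i − 2s − 2 + 1/2) · ∏_{j=1}^{s} (b_j + b_j⁻¹)^(2j − 2q − 1/2)`.
(Indices in the exponents are 1-based; `Fin` indices are 0-based, whence the `+ 2`.) -/
theorem oscillator_product_estimate (q s : ℕ) (hs : 1 ≤ s) (hsq : s ≤ q)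
    (a : Fin q → ℝ) (b : Fin s → ℝ)
    (ha_anti : Antitone a) (ha_one : ∀ i, 1 ≤ a i)
    (hb_anti : Antitone b) (hb_one : ∀ j, 1 ≤ b j) :
    (∏ i : Fin q, ∏ j : Fin s,
        ((a i) ^ 2 + (b j) ^ 2 + ((a i) ^ 2)⁻¹ + ((b j) ^ 2)⁻¹)⁻¹)
      ≤ (∏ i : Fin s, (a (Fin.castLE hsq i) + (a (Fin.castLE hsq i))⁻¹)
            ^ (2 * ((i : ℕ) : ℝ) + 2 - 2 * (s : ℝ) - 2 + 1 / 2))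
        * (∏ j : Fin s, (b j + (b j)⁻¹)
            ^ (2 * ((j : ℕ) : ℝ) + 2 - 2 * (q : ℝ) - 1 / 2)) := by
  set α : ℕ → ℕ → ℝ := fun i j => if i < j then 2 else if i = j then 3/2 else 0 with hα_def
  set β : ℕ → ℕ → ℝ := fun i j => if j < i then 2 else if j = i then 1/2 else 0 with hβ_def
  have hα_nonneg : ∀ i j : ℕ, 0 ≤ α i j := by
    intro i j; simp only [hα_def]; split_ifs <;> norm_num
  have hβ_nonneg : ∀ i j : ℕ, 0 ≤ β i j := by
    intro i j; simp only [hβ_def]; split_ifs <;> norm_num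
  have hαβ : ∀ i j : ℕ, α i j + β i j = 2 := by
    intro i j
    simp only [hα_def, hβ_def]
    rcases lt_trichotomy i j with h | h | h
    · rw [if_pos h, if_neg (by omega), if_neg (by omega)]; ring
    · rw [if_neg (by omega), if_pos h, if_neg (by omega), if_pos h.symm]; ring
    · rw [if_neg (by omega), if_neg (by omega), if_pos h]; ring
  have hApos : ∀ i : Fin q, (0:ℝ) < a i + (a i)⁻¹ := by
    intro i
    have h1 := ha_one i
    have h0 : (0:ℝ) < a i := by linarith
    positivity
  have hBpos : ∀ j : Fin s, (0:ℝ) < b j + (b j)⁻¹ := by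
    intro j
    have h1 := hb_one j
    have h0 : (0:ℝ) < b j := by linarith
    positivity
  -- Step 1: pointwise bound
  have step1 : (∏ i : Fin q, ∏ j : Fin s,
        ((a i) ^ 2 + (b j) ^ 2 + ((a i) ^ 2)⁻¹ + ((b j) ^ 2)⁻¹)⁻¹)
      ≤ ∏ i : Fin q, ∏ j : Fin s,
        ((a i + (a i)⁻¹) ^ (-(α i j)) * (b j + (b j)⁻¹) ^ (-(β i j))) := by
    apply Finset.prod_le_prod
    · intro i _
      apply Finset.prod_nonneg
      intro j _
      have ha1 := ha_one i; have hb1 := hb_one j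
      have ha0 : (0:ℝ) < a i := by linarith
      have hb0 : (0:ℝ) < b j := by linarith
      positivity
    · intro i _
      apply Finset.prod_le_prod
      · intro j _
        have ha1 := ha_one i; have hb1 := hb_one j
        have ha0 : (0:ℝ) < a i := by linarith
        have hb0 : (0:ℝ) < b j := by linarith
        positivity
      · intro j _
        exact osc_key_inv _ _ _ _ (ha_one i) (hb_one j)
          (hα_nonneg i j) (hβ_nonneg i j) (hαβ i j)
  refine le_trans step1 (le_of_eq ?_)
  have step2 : (∏ i : Fin q, ∏ j : Fin s,
        ((a i + (a i)⁻¹) ^ (-(α i j)) * (b j + (b j)⁻¹) ^ (-(β i j))))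
      = (∏ i : Fin q, ∏ j : Fin s, (a i + (a i)⁻¹) ^ (-(α i j)))
        * (∏ i : Fin q, ∏ j : Fin s, (b j + (b j)⁻¹) ^ (-(β i j))) := by
    simp only [Finset.prod_mul_distrib]
  rw [step2]
  congr 1
  -- A part
  · have hrow : ∀ i : Fin q, (∏ j : Fin s, (a i + (a i)⁻¹) ^ (-(α i j)))
        = (a i + (a i)⁻¹) ^ (-(∑ j ∈ Finset.range s, α i j)) := by
      intro i
      rw [← Real.rpow_sum_of_pos (hApos i) (fun j : Fin s => -(α i j)) Finset.univ]
      congr 1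
      rw [← Fin.sum_univ_eq_sum_range (fun j => α i j) s]
      exact Finset.sum_neg_distrib _
    simp only [hrow]
    have hone : ∀ x ∈ (Finset.univ : Finset (Fin q)),
        x ∉ (Finset.univ : Finset (Fin s)).map (Fin.castLEEmb hsq) →
        (a x + (a x)⁻¹) ^ (-(∑ j ∈ Finset.range s, α x j)) = 1 := by
      intro x _ hx
      have hxs : ¬ ((x:ℕ) < s) := by
        intro hlt
        exact hx (Finset.mem_map.2 ⟨⟨x, hlt⟩, Finset.mem_univ _, by
          simp [Fin.castLEEmb, Fin.ext_iff]⟩)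
      have hz : ∑ j ∈ Finset.range s, α x j = 0 := by
        apply Finset.sum_eq_zero
        intro j hj
        rw [Finset.mem_range] at hj
        simp only [hα_def]
        rw [if_neg (by omega), if_neg (by omega)]
      rw [hz, neg_zero, Real.rpow_zero]
    rw [← Finset.prod_subset (Finset.subset_univ _) hone, Finset.prod_map]
    apply Finset.prod_congr rfl
    intro i _
    simp only [Fin.castLEEmb_apply, Fin.coe_castLE]
    congr 1
    simp only [hα_def]
    rw [osc_sum_aux (3/2) s i i.isLt]
    push_cast
    ring
  -- B part
  · rw [Finset.prod_comm]
    apply Finset.prod_congr rfl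
    intro j _
    rw [← Real.rpow_sum_of_pos (hBpos j) (fun i : Fin q => -(β i j)) Finset.univ]
    congr 1
    rw [show (∑ i : Fin q, -(β (i:ℕ) (j:ℕ))) = -(∑ i ∈ Finset.range q, β i j) by
      rw [← Fin.sum_univ_eq_sum_range (fun i => β i j) q]
      exact Finset.sum_neg_distrib _]
    simp only [hβ_def]
    rw [osc_sum_aux (1/2) q j (lt_of_lt_of_le j.isLt hsq)]
    push_cast
    ring
end
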